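/- Let 𝒳 be a d-dimensional trajectory set and (X,k) a node, and set A = ΔX(𝒳_{(X,k)}) = {X'_{k+1} − X'_k : X' ∈ 𝒳_{(X,k)}} ⊆ ℝ^d (a nonempty set). Then (X,k) is an arbitrage-free node, i.e. for every h ∈ ℝ^d either h·y = 0 for all y ∈ A or inf_{y∈A} h·y < 0, if and only if 0 belongs to the relative interior of the convex hull of A. -/

import Mathlib

open scoped InnerProductSpace ENNReal
open Finset

namespace Traj

variable {E : Type*} [NormedAddCommGroup E] [InnerProductSpace ℝ E]

/-- A trajectory set: a nonempty set of sequences sharing a common initial value. -/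
def IsTrajectorySet (T : Set (ℕ → E)) (x0 : E) : Prop :=
  T.Nonempty ∧ ∀ X ∈ T, X 0 = x0

/-- The conditional trajectory set at the node `(X, k)`. -/
def condSet (T : Set (ℕ → E)) (X : ℕ → E) (k : ℕ) : Set (ℕ → E) :=
  {Y | Y ∈ T ∧ ∀ i ≤ k, Y i = X i}

/-- Non-anticipativity of a family `(G i)_{i ≥ j}` of functions on the conditional set. -/
def NonAnticipative (T : Set (ℕ → E)) (X : ℕ → E) (j : ℕ)
    {F : Type*} (G : ℕ → (ℕ → E) → F) : Prop :=
  ∀ i, j ≤ i → ∀ Y ∈ condSet T X j, ∀ Z ∈ condSet T X j,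
    (∀ k, j ≤ k → k ≤ i → Y k = Z k) → G i Y = G i Z

/-- The simple portfolio payoff `Π^{V,H}_{j,n}`. -/
noncomputable def piPort (H : ℕ → (ℕ → E) → E) (j n : ℕ) (V : ℝ) (Y : ℕ → E) : ℝ :=
  V + ∑ i ∈ Finset.Ico j n, ⟪H i Y, Y (i + 1) - Y i⟫_ℝ

/-- The total initial cost `Σ_{m ≥ 0} V^m` of a generalized portfolio (`V^m ≥ 0` for `m ≥ 1`). -/
noncomputable def SuperhedgeCost (V : ℕ → ℝ) : EReal :=
  (V 0 : EReal) + ((∑' m : ℕ, ENNReal.ofReal (V (m + 1)) : ℝ≥0∞) : EReal)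

/-- `(V, H, n)` is a generalized superhedge of `f` at node `(X, j)`: `f_0 = Π^{V⁰,H⁰}_{j,n₀}`
and, for `m ≥ 1`, `f_m = Π^{Vᵐ,Hᵐ}_{j,n_m}` with `Π^{Vᵐ,Hᵐ}_{j,n} ≥ 0` for all `n ≥ j`,
and `f ≤ Σ_{m ≥ 0} f_m` on the conditional set. -/
def IsSuperhedge (T : Set (ℕ → E)) (X : ℕ → E) (j : ℕ) (f : (ℕ → E) → EReal)
    (V : ℕ → ℝ) (H : ℕ → ℕ → (ℕ → E) → E) (n : ℕ → ℕ) : Prop :=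
  (∀ m, NonAnticipative T X j (H m)) ∧ (∀ m, j ≤ n m) ∧
  (∀ m, 1 ≤ m → ∀ k, j ≤ k → ∀ Y ∈ condSet T X j, 0 ≤ piPort (H m) j k (V m) Y) ∧
  (∀ Y ∈ condSet T X j,
    f Y ≤ (piPort (H 0) j (n 0) (V 0) Y : EReal)
      + ((∑' m : ℕ, ENNReal.ofReal (piPort (H (m + 1)) j (n (m + 1)) (V (m + 1)) Y) :
          ℝ≥0∞) : EReal))

/-- The conditional superhedging operator `σ̄_j f (X)`. -/
noncomputable def sigmaUp (T : Set (ℕ → E)) (X : ℕ → E) (j : ℕ)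
    (f : (ℕ → E) → EReal) : EReal :=
  sInf {c : EReal | ∃ V H n, IsSuperhedge T X j f V H n ∧ c = SuperhedgeCost V}

/-- The conditional underhedging operator `σ̲_j f = -σ̄_j (-f)`. -/
noncomputable def sigmaDown (T : Set (ℕ → E)) (X : ℕ → E) (j : ℕ)
    (f : (ℕ → E) → EReal) : EReal :=
  - sigmaUp T X j (fun Y => - f Y)

/-- Hedge data for the conditional norm operator: all portfolios are nonnegative. -/
def IsNormHedge (T : Set (ℕ → E)) (X : ℕ → E) (j : ℕ) (f : (ℕ → E) → ℝ≥0∞)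
    (V : ℕ → ℝ) (H : ℕ → ℕ → (ℕ → E) → E) (n : ℕ → ℕ) : Prop :=
  (∀ m, NonAnticipative T X j (H m)) ∧ (∀ m, j ≤ n m) ∧
  (∀ m, ∀ k, j ≤ k → ∀ Y ∈ condSet T X j, 0 ≤ piPort (H m) j k (V m) Y) ∧
  (∀ Y ∈ condSet T X j,
    f Y ≤ ∑' m : ℕ, ENNReal.ofReal (piPort (H m) j (n m) (V m) Y))

/-- The conditional norm operator `Ī_j f (X)` (for nonnegative extended-real `f`). -/
noncomputable def Ibar (T : Set (ℕ → E)) (X : ℕ → E) (j : ℕ)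
    (f : (ℕ → E) → ℝ≥0∞) : ℝ≥0∞ :=
  sInf {c : ℝ≥0∞ | ∃ V H n, IsNormHedge T X j f V H n ∧
    c = ∑' m : ℕ, ENNReal.ofReal (V m)}

/-- `A` is conditionally null at the node `(X, j)`. -/
def NullAt (T : Set (ℕ → E)) (X : ℕ → E) (j : ℕ) (A : Set (ℕ → E)) : Prop :=
  Ibar T X j (A.indicator fun _ => (1 : ℝ≥0∞)) = 0

/-- `A` is a (global) null set. -/
def IsNull (T : Set (ℕ → E)) (A : Set (ℕ → E)) : Prop :=
  ∀ X ∈ T, NullAt T X 0 A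

/-- Property `(L_{(X,j)})`. -/
def PropertyL (T : Set (ℕ → E)) (X : ℕ → E) (j : ℕ) : Prop :=
  ∀ V H n, IsSuperhedge T X j (fun _ => (0 : EReal)) V H n →
    (0 : EReal) ≤ SuperhedgeCost V

/-- `(X, k)` is an arbitrage-free node. -/
def ArbitrageFreeNode (T : Set (ℕ → E)) (X : ℕ → E) (k : ℕ) : Prop :=
  ∀ h : E, (∀ Y ∈ condSet T X k, ⟪h, Y (k + 1) - Y k⟫_ℝ = 0) ∨
    (⨅ Y ∈ condSet T X k, ((⟪h, Y (k + 1) - Y k⟫_ℝ : ℝ) : EReal)) < 0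

/-- The set `𝒩` of trajectories passing (non-constantly) through an arbitrage node. -/
def arbNull (T : Set (ℕ → E)) : Set (ℕ → E) :=
  {X | X ∈ T ∧ ∃ j : ℕ, ¬ ArbitrageFreeNode T X j ∧ X (j + 1) ≠ X j}

/-- Property `(L)`-a.e. -/
def LaeHolds (T : Set (ℕ → E)) : Prop :=
  (∀ X ∈ T \ arbNull T, ∀ k, 1 ≤ k → PropertyL T X k) ∧
  (∀ X ∈ T, PropertyL T X 0)

/-- A bounded non-anticipative stopping rule. -/
def BoundedStoppingRule (T : Set (ℕ → E)) (N : (ℕ → E) → ℕ) : Prop :=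
  (∃ nstar, ∀ X ∈ T, N X ≤ nstar) ∧
  (∀ k : ℕ, ∀ X ∈ T, ∀ Y ∈ T, (∀ i ≤ k, X i = Y i) → (N X ≤ k ↔ N Y ≤ k))

end Traj

namespace Traj

open Set


lemma mem_intrinsicInterior_iff_ball {E : Type*} [NormedAddCommGroup E] [NormedSpace ℝ E]
    {s : Set E} {x : E} (hx : x ∈ affineSpan ℝ s) :
    x ∈ intrinsicInterior ℝ s ↔
      ∃ ε > 0, ∀ y ∈ (affineSpan ℝ s : Set E), dist y x < ε → y ∈ s := by
  rw [mem_intrinsicInterior]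
  constructor
  · rintro ⟨y, hy, rfl⟩
    rw [mem_interior_iff_mem_nhds, Metric.mem_nhds_iff] at hy
    obtain ⟨ε, hε, hball⟩ := hy
    refine ⟨ε, hε, fun z hz hd => ?_⟩
    exact hball (show (⟨z, hz⟩ : affineSpan ℝ s) ∈ Metric.ball y ε by
      rw [Metric.mem_ball, Subtype.dist_eq]; exact hd)
  · rintro ⟨ε, hε, hball⟩
    refine ⟨⟨x, hx⟩, ?_, rfl⟩
    rw [mem_interior_iff_mem_nhds, Metric.mem_nhds_iff]
    refine ⟨ε, hε, fun z hz => ?_⟩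
    exact hball z z.2 (by rwa [Metric.mem_ball, Subtype.dist_eq] at hz)

lemma inner_nonneg_hull {E : Type*} [NormedAddCommGroup E] [InnerProductSpace ℝ E]
    {A : Set E} (h : E) (hA : ∀ y ∈ A, 0 ≤ ⟪h, y⟫_ℝ) :
    ∀ y ∈ convexHull ℝ A, 0 ≤ ⟪h, y⟫_ℝ := fun y hy =>
  convexHull_min (fun z hz => hA z hz)
    (convex_halfSpace_ge ⟨fun a b => inner_add_right _ _ _,
      fun c a => real_inner_smul_right _ _ _⟩ 0) hy

lemma inner_zero_hull {E : Type*} [NormedAddCommGroup E] [InnerProductSpace ℝ E]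
    {A : Set E} (h : E) (hA : ∀ y ∈ A, ⟪h, y⟫_ℝ = 0) :
    ∀ y ∈ convexHull ℝ A, ⟪h, y⟫_ℝ = 0 := fun y hy =>
  convexHull_min (fun z hz => hA z hz)
    (convex_hyperplane ⟨fun a b => inner_add_right _ _ _,
      fun c a => real_inner_smul_right _ _ _⟩ 0) hy

lemma zero_mem_intrinsicInterior_convexHull_iff
    {E : Type*} [NormedAddCommGroup E] [InnerProductSpace ℝ E] [FiniteDimensional ℝ E]
    {A : Set E} (hA : A.Nonempty) :
    (∀ h : E, (∀ y ∈ A, ⟪h, y⟫_ℝ = 0) ∨ ∃ y ∈ A, ⟪h, y⟫_ℝ < 0) ↔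
      (0 : E) ∈ intrinsicInterior ℝ (convexHull ℝ A) := by
  set C := convexHull ℝ A with hC
  have hCne : C.Nonempty := hA.mono (subset_convexHull ℝ A)
  constructor
  · -- arbitrage-free ⇒ 0 ∈ ri C
    intro hyp
    by_contra h0
    by_cases hS : (0 : E) ∈ affineSpan ℝ C
    · -- 0 in the affine span: separate inside the span
      set W := (affineSpan ℝ C).direction with hW
      have hset : ∀ x : E, x ∈ affineSpan ℝ C ↔ x ∈ W := by
        intro x
        constructor
        · intro hx
          have := AffineSubspace.vsub_mem_direction hx hS
          simpa using this
        · intro hx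
          have := AffineSubspace.vadd_mem_of_mem_direction hx hS
          simpa using this
      set C' : Set W := ((↑) ⁻¹' C : Set W) with hC'
      have hC'conv : Convex ℝ C' := (convex_convexHull ℝ A).linear_preimage W.subtype
      obtain ⟨w, hw⟩ := Set.Nonempty.intrinsicInterior (convex_convexHull ℝ A)
        (hA.mono (subset_convexHull ℝ A))
      have hwS : w ∈ affineSpan ℝ C := subset_affineSpan ℝ C (intrinsicInterior_subset hw)
      obtain ⟨ε₁, hε₁, hball₁⟩ := (mem_intrinsicInterior_iff_ball hwS).mp hw
      have hwW : w ∈ W := (hset w).mp hwS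
      have hint : (⟨w, hwW⟩ : W) ∈ interior C' := by
        rw [mem_interior_iff_mem_nhds, Metric.mem_nhds_iff]
        refine ⟨ε₁, hε₁, fun z hz => ?_⟩
        exact hball₁ z ((hset z).mpr z.2) (by rwa [Metric.mem_ball, Subtype.dist_eq] at hz)
      have h0W : (0 : E) ∈ W := (hset 0).mp hS
      have h0not : (⟨0, h0W⟩ : W) ∉ interior C' := by
        intro hmem
        apply h0
        rw [mem_intrinsicInterior_iff_ball hS]
        rw [mem_interior_iff_mem_nhds, Metric.mem_nhds_iff] at hmem
        obtain ⟨ε, hε, hb⟩ := hmem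
        refine ⟨ε, hε, fun y hyS hyd => ?_⟩
        exact hb (show (⟨y, (hset y).mp hyS⟩ : W) ∈ Metric.ball (⟨0, h0W⟩ : W) ε by
          rw [Metric.mem_ball, Subtype.dist_eq]; exact hyd)
      obtain ⟨f, hf⟩ := geometric_hahn_banach_open_point hC'conv.interior isOpen_interior h0not
      have hf0 : f (⟨0, h0W⟩ : W) = 0 := by
        have h00 : (⟨0, h0W⟩ : W) = 0 := rfl
        rw [h00, map_zero]
      have hfw : f (⟨w, hwW⟩ : W) < 0 := by
        have := hf _ hint; rwa [hf0] at this
      have hfle : ∀ z ∈ C', f z ≤ 0 := by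
        intro z hz
        by_contra hgt
        push_neg at hgt
        set b : ℝ := f z / (f z - f (⟨w, hwW⟩ : W)) with hb
        have hb0 : 0 < b := div_pos hgt (by linarith)
        have hcombo := hC'conv.combo_self_interior_mem_interior hz hint
          (a := 1 - b) (b := b) (by
            have : b < 1 := (div_lt_one (by linarith)).mpr (by linarith)
            linarith) hb0 (by ring)
        have hlt := hf _ hcombo
        rw [hf0, map_add, map_smul, map_smul, smul_eq_mul, smul_eq_mul] at hlt
        have hval : (1 - b) * f z + b * f (⟨w, hwW⟩ : W) = 0 := by
          have hne : f z - f (⟨w, hwW⟩ : W) ≠ 0 := by linarith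
          rw [hb]
          field_simp
          ring
        linarith
      set g : E := (((InnerProductSpace.toDual ℝ W).symm f : W) : E) with hg
      have hginner : ∀ z : W, ⟪g, (z : E)⟫_ℝ = f z := by
        intro z
        have h1 := Submodule.coe_inner W ((InnerProductSpace.toDual ℝ W).symm f) z
        rw [hg, ← h1, InnerProductSpace.toDual_symm_apply]
      have hgA : ∀ y ∈ A, ⟪g, y⟫_ℝ ≤ 0 := by
        intro y hy
        have hyW : y ∈ W := (hset y).mp (subset_affineSpan ℝ C (subset_convexHull ℝ A hy))
        have hyC' : (⟨y, hyW⟩ : W) ∈ C' := subset_convexHull ℝ A hy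
        have := hginner (⟨y, hyW⟩ : W)
        rw [this]
        exact hfle _ hyC'
      have hnotall : ¬ ∀ y ∈ A, ⟪g, y⟫_ℝ = 0 := by
        intro hall
        have hwc : ⟪g, w⟫_ℝ = 0 := inner_zero_hull g hall w (intrinsicInterior_subset hw)
        have := hginner (⟨w, hwW⟩ : W)
        rw [hwc] at this
        linarith
      rcases hyp (-g) with hall | ⟨y, hy, hlt⟩
      · exact hnotall fun y hy => by
          have := hall y hy; rwa [inner_neg_left, neg_eq_zero] at this
      · rw [inner_neg_left, neg_lt, neg_zero] at hlt
        exact absurd (hgA y hy) (not_le.mpr hlt)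
    · -- 0 not in affine span: positive constant functional
      obtain ⟨p, hp⟩ := hCne
      have hpS : p ∈ affineSpan ℝ C := subset_affineSpan ℝ C hp
      set D := (affineSpan ℝ C).direction with hD
      set q : E := (D.orthogonalProjectionOnto p : E) with hq
      set h := p - q with hh
      have hqD : q ∈ D := SetLike.coe_mem _
      have hh0 : h ≠ 0 := by
        intro he
        apply hS
        have hpD : p ∈ D := by rw [show p = q from sub_eq_zero.mp he]; exact hqD
        have := AffineSubspace.vadd_mem_of_mem_direction (Submodule.neg_mem D hpD) hpS
        simpa using this
      have horth : ∀ v ∈ D, ⟪h, v⟫_ℝ = 0 := by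
        intro v hv
        have hmem : h ∈ Dᗮ := by
          have := Submodule.sub_starProjection_mem_orthogonal (K := D) p
          rwa [Submodule.starProjection_apply] at this
        exact (Submodule.mem_orthogonal' D h).mp hmem v hv
      have key : ∀ y ∈ A, ⟪h, y⟫_ℝ = ‖h‖ ^ 2 := by
        intro y hy
        have hyS : y ∈ affineSpan ℝ C := subset_affineSpan ℝ C (subset_convexHull ℝ A hy)
        have hyp' : y - p ∈ D := by
          have := AffineSubspace.vsub_mem_direction hyS hpS
          simpa using this
        have hyeq : (y - p) + h + q = y := by rw [hh]; abel
        rw [← hyeq, inner_add_right, inner_add_right, horth _ hyp', horth _ hqD,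
          real_inner_self_eq_norm_sq]
        ring
      have hn : (0:ℝ) < ‖h‖ ^ 2 := pow_pos (norm_pos_iff.mpr hh0) 2
      rcases hyp h with hall | ⟨y, hy, hlt⟩
      · obtain ⟨a, ha⟩ := hA
        have h1 := key a ha
        rw [hall a ha] at h1
        linarith
      · rw [key y hy] at hlt; linarith
  · -- 0 ∈ ri C ⇒ arbitrage-free
    intro hri h
    by_cases hz : ∀ y ∈ A, ⟪h, y⟫_ℝ = 0
    · exact Or.inl hz
    push_neg at hz
    obtain ⟨y0, hy0, hne⟩ := hz
    right
    have h0C : (0 : E) ∈ C := intrinsicInterior_subset hri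
    have h0S : (0 : E) ∈ affineSpan ℝ C := subset_affineSpan ℝ C h0C
    obtain ⟨ε, hε, hball⟩ := (mem_intrinsicInterior_iff_ball h0S).mp hri
    by_cases hsign : ⟪h, y0⟫_ℝ < 0
    · exact ⟨y0, hy0, hsign⟩
    have hpos : 0 < ⟪h, y0⟫_ℝ := lt_of_le_of_ne (not_lt.mp hsign) (Ne.symm hne)
    have hy0ne : y0 ≠ 0 := by rintro rfl; simp at hne
    have hny0 : (0:ℝ) < ‖y0‖ := norm_pos_iff.mpr hy0ne
    set δ := ε / (2 * ‖y0‖) with hδ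
    have hδpos : 0 < δ := by positivity
    set w := (-δ) • y0 with hw
    have hy0S : y0 ∈ affineSpan ℝ C := subset_affineSpan ℝ C (subset_convexHull ℝ A hy0)
    have hwS : w ∈ affineSpan ℝ C := by
      have hd : y0 -ᵥ (0:E) ∈ (affineSpan ℝ C).direction :=
        AffineSubspace.vsub_mem_direction hy0S h0S
      have := AffineSubspace.vadd_mem_of_mem_direction
        (Submodule.smul_mem _ (-δ) hd) h0S
      simpa [hw] using this
    have hwC : w ∈ C := by
      apply hball w hwS
      have h1 : dist w 0 = δ * ‖y0‖ := by
        rw [dist_zero_right, hw, norm_smul]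
        simp [abs_of_pos hδpos]
      have h2 : δ * ‖y0‖ = ε / 2 := by
        rw [hδ]; field_simp
      rw [h1, h2]
      linarith
    have hwneg : ⟪h, w⟫_ℝ < 0 := by
      rw [hw, real_inner_smul_right]
      nlinarith
    by_contra hno
    push_neg at hno
    exact absurd (inner_nonneg_hull h (fun y hy => hno y hy) w hwC) (not_le.mpr hwneg)



/-- a node is arbitrage-free iff `0` lies in the relative (intrinsic) interior of
the convex hull of the set of increments at the node. -/
theorem arbitrageFreeNode_iff_zero_mem_intrinsicInterior
    (d : ℕ) (T : Set (ℕ → EuclideanSpace ℝ (Fin d))) (x0 : EuclideanSpace ℝ (Fin d))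
    (hT : IsTrajectorySet T x0)
    (X : ℕ → EuclideanSpace ℝ (Fin d)) (hX : X ∈ T) (k : ℕ) :
    ArbitrageFreeNode T X k ↔
      (0 : EuclideanSpace ℝ (Fin d)) ∈
        intrinsicInterior ℝ
          (convexHull ℝ ((fun Y => Y (k + 1) - Y k) '' condSet T X k)) := by
  set A := (fun Y => Y (k + 1) - Y k) '' condSet T X k with hA
  have hAne : A.Nonempty := ⟨X (k + 1) - X k, ⟨X, ⟨hX, fun i _ => rfl⟩, rfl⟩⟩
  rw [← zero_mem_intrinsicInterior_convexHull_iff hAne]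
  unfold ArbitrageFreeNode
  apply forall_congr'
  intro h
  apply or_congr
  · constructor
    · rintro hall y ⟨Y, hY, rfl⟩
      exact hall Y hY
    · intro hall Y hY
      exact hall _ ⟨Y, hY, rfl⟩
  · constructor
    · intro hlt
      obtain ⟨Y, hY⟩ := iInf_lt_iff.mp hlt
      obtain ⟨hmem, h2⟩ := iInf_lt_iff.mp hY
      refine ⟨_, ⟨Y, hmem, rfl⟩, ?_⟩
      exact_mod_cast h2
    · rintro ⟨y, ⟨Y, hY, rfl⟩, hlt⟩
      refine lt_of_le_of_lt (iInf₂_le Y hY) ?_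
      exact_mod_cast hlt

end Traj
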